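/- Fix positive integers m and j with 2 ≤ j and s with 2 ≤ s ≤ j ≤ n, and ℓ with 1 ≤ ℓ ≤ n, excluding the case s = j = n. The number of lattice points (x_1,...,x_n) ∈ Z^n such that exactly s of the coordinates x_1,...,x_j equal −ℓ, the remaining coordinates among x_1,...,x_j are ≥ −(ℓ−1), the coordinates x_{j+1},...,x_n are ≥ 0, and the weight equals k/m, is C(j,s)·C(k − mℓ + n − j − 1, n − s − 1). -/

import Mathlib

open Pointwise

/-- Integer binomial coefficient, zero for negative upper argument. -/
def ch (a : ℤ) (b : ℕ) : ℤ := if a < 0 then 0 else ((a.toNat).choose b : ℤ)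

/-- The weight of a lattice point with respect to a polytope given as the convex
hull of a vertex set `V`: the least `c ≥ 0` with `x ∈ c·Δ`. -/
noncomputable def polyWeight {n : ℕ} (V : Set (Fin n → ℝ)) (x : Fin n → ℤ) : ℝ :=
  sInf {c : ℝ | 0 ≤ c ∧ (fun i => (x i : ℝ)) ∈ c • convexHull ℝ V}

/-- The vertices of the Kloosterman polytope `Δ(K^j_{n,m})`:
`−(e₁+⋯+e_j)` and `m·e_i` for `1 ≤ i ≤ n`. -/
def klVerts (n j m : ℕ) : Set (Fin n → ℝ) :=
  insert (fun i : Fin n => if (i : ℕ) < j then (-1 : ℝ) else 0)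
    (Set.range fun ℓ : Fin n => fun i => if i = ℓ then (m : ℝ) else 0)

section Helpers

open Finset

variable {α : Type*} [DecidableEq α]

lemma count_univ_sum [Fintype α] (m : Multiset α) : ∑ a : α, m.count a = Multiset.card m := by
  rw [← Multiset.toFinset_sum_count_eq]
  exact (Finset.sum_subset (Finset.subset_univ _) fun x _ hx => by
    simpa [Multiset.count_eq_zero] using hx).symm

lemma card_piAntidiag_univ [Fintype α] (T : ℕ) :
    (Finset.piAntidiag (Finset.univ : Finset α) T).card
      = (Fintype.card α + T - 1).choose T := by
  rw [← Sym.card_sym_eq_choose, Fintype.card]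
  refine Finset.card_bij'
    (i := fun f hf => ⟨∑ i : α, f i • ({i} : Multiset α), ?_⟩)
    (j := fun g _ => fun i => Multiset.count i g.val) ?_ ?_ ?_ ?_
  · -- card proof
    rw [Finset.mem_piAntidiag] at hf
    rw [← count_univ_sum]
    have : ∀ a : α, Multiset.count a (∑ i : α, f i • ({i} : Multiset α)) = f a := by
      intro a
      rw [Multiset.count_sum']
      simp [Multiset.count_nsmul, Multiset.count_singleton]
    simp only [this]
    exact hf.1
  · intro a ha; exact Finset.mem_univ _
  · intro g hg
    rw [Finset.mem_piAntidiag]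
    refine ⟨?_, fun i _ => Finset.mem_univ i⟩
    rw [count_univ_sum]; exact g.2
  · intro f hf
    funext a
    show Multiset.count a (∑ i : α, f i • ({i} : Multiset α)) = f a
    rw [Multiset.count_sum']
    simp [Multiset.count_nsmul, Multiset.count_singleton]
  · intro g hg
    ext : 1
    show (∑ x : α, Multiset.count x g.val • ({x} : Multiset α)) = g.val
    rw [← Finset.sum_subset (Finset.subset_univ (g.val).toFinset)
      (fun x _ hx => by rw [Multiset.count_eq_zero.mpr (by simpa using hx), zero_smul])]
    exact Multiset.toFinset_sum_count_nsmul_eq g.val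

lemma card_piAntidiag (A : Finset α) (T : ℕ) :
    (Finset.piAntidiag A T).card = (A.card + T - 1).choose T := by
  rw [← Fintype.card_coe A, ← card_piAntidiag_univ (α := ↥A) T]
  refine Finset.card_bij'
    (i := fun f _ => fun a : ↥A => f a)
    (j := fun g _ => fun x => if h : x ∈ A then g ⟨x, h⟩ else 0) ?_ ?_ ?_ ?_
  · intro f hf
    rw [Finset.mem_piAntidiag] at hf ⊢
    refine ⟨?_, fun i _ => Finset.mem_univ i⟩
    rw [Finset.univ_eq_attach, Finset.sum_attach A f]
    exact hf.1
  · intro g hg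
    rw [Finset.mem_piAntidiag] at hg ⊢
    constructor
    · show (A.sum fun x => if h : x ∈ A then g ⟨x, h⟩ else 0) = T
      rw [← hg.1, Finset.univ_eq_attach, ← Finset.sum_attach A fun x => if h : x ∈ A then g ⟨x, h⟩ else 0]
      exact Finset.sum_congr rfl fun a _ => by simp [a.2]
    · intro i hi
      by_contra hiA
      exact hi (by simp [hiA])
  · intro f hf
    funext x
    by_cases h : x ∈ A
    · simp [h]
    · rw [Finset.mem_piAntidiag] at hf
      simp only [dif_neg h]
      by_contra hne
      exact h (hf.2 x (Ne.symm hne))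
  · intro g hg
    funext a
    simp [a.2]

end Helpers

lemma card_filter_lt {n j : ℕ} (hjn : j ≤ n) :
    (Finset.univ.filter fun i : Fin n => (i : ℕ) < j).card = j := by
  have : (Finset.univ.filter fun i : Fin n => (i : ℕ) < j)
      = Finset.image (Fin.castLE hjn) Finset.univ := by
    ext i
    rw [Finset.mem_filter, Finset.mem_image]
    constructor
    · rintro ⟨-, hi⟩; exact ⟨⟨(i : ℕ), hi⟩, Finset.mem_univ _, Fin.ext (by simp)⟩
    · rintro ⟨a, -, rfl⟩; exact ⟨Finset.mem_univ _, a.2⟩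
  rw [this, Finset.card_image_of_injective _ (Fin.castLE_injective hjn)]
  simp

lemma sum_ite_lt {n j : ℕ} (hjn : j ≤ n) (r : ℝ) :
    ∑ i : Fin n, (if (i : ℕ) < j then r else 0) = j * r := by
  rw [← Finset.sum_filter, Finset.sum_const, card_filter_lt hjn, nsmul_eq_mul]

lemma mem_hull {n j m : ℕ} (μ₀ : ℝ) (μ : Fin n → ℝ) (h₀ : 0 ≤ μ₀)
    (hμ : ∀ i, 0 ≤ μ i) (hsum : μ₀ + ∑ i, μ i = 1) :
    (fun i : Fin n => (if (i : ℕ) < j then -μ₀ else 0) + m * μ i)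
      ∈ convexHull ℝ (klVerts n j m) := by
  have hconv := convex_convexHull ℝ (klVerts n j m)
  have hmem : ∀ o : Option (Fin n),
      (Option.elim o (fun i : Fin n => if (i : ℕ) < j then (-1 : ℝ) else 0)
        (fun ι => fun i => if i = ι then (m : ℝ) else 0)) ∈ convexHull ℝ (klVerts n j m) := by
    rintro (_ | ι)
    · exact subset_convexHull ℝ _ (Set.mem_insert _ _)
    · exact subset_convexHull ℝ _ (Set.mem_insert_of_mem _ ⟨ι, rfl⟩)
  have := hconv.sum_mem (t := (Finset.univ : Finset (Option (Fin n))))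
    (w := fun o => Option.elim o μ₀ μ)
    (z := fun o => Option.elim o (fun i : Fin n => if (i : ℕ) < j then (-1 : ℝ) else 0)
      (fun ι => fun i => if i = ι then (m : ℝ) else 0))
    (fun o _ => by cases o with | none => exact h₀ | some ι => exact hμ ι)
    (by rw [Fintype.sum_option]; exact hsum)
    (fun o _ => hmem o)
  convert this using 1
  funext i
  rw [Finset.sum_apply, Fintype.sum_option]
  simp only [Option.elim, smul_eq_mul, Pi.smul_apply]
  have : ∀ ι : Fin n, μ ι * (if i = ι then (m : ℝ) else 0)
      = if i = ι then μ ι * m else 0 := by intro ι; split <;> simp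
  rw [Finset.sum_congr rfl (fun ι _ => this ι), Finset.sum_ite_eq Finset.univ i (fun ι => μ ι * m)]
  simp only [Finset.mem_univ, if_true]
  split <;> ring

lemma weight_eq {n j m : ℕ} (hm : 0 < m) (hj1 : 1 ≤ j) (hjn : j ≤ n) (x : Fin n → ℤ) (ℓ : ℕ) (hℓ1 : 1 ≤ ℓ)
    (hlow : ∀ i : Fin n, (i : ℕ) < j → -(ℓ : ℤ) ≤ x i)
    (hlow2 : ∀ i : Fin n, j ≤ (i : ℕ) → 0 ≤ x i)
    (i₀ : Fin n) (hi₀ : (i₀ : ℕ) < j) (hx₀ : x i₀ = -(ℓ : ℤ)) :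
    polyWeight (klVerts n j m) x
      = (((∑ i, x i : ℤ) : ℝ) + (m + j) * ℓ) / m := by
  have hm' : (0 : ℝ) < m := by exact_mod_cast hm
  -- positivity of the numerator
  have hsum_low : (-(j : ℤ)) * ℓ ≤ ∑ i, x i := by
    have : ∀ i : Fin n, (if (i : ℕ) < j then -(ℓ : ℤ) else 0) ≤ x i := by
      intro i
      by_cases h : (i : ℕ) < j
      · simpa [h] using hlow i h
      · simpa [h] using hlow2 i (le_of_not_gt h)
    calc (-(j : ℤ)) * ℓ = ∑ i : Fin n, (if (i : ℕ) < j then -(ℓ : ℤ) else 0) := by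
          rw [← Finset.sum_filter, Finset.sum_const, card_filter_lt hjn]; push_cast; ring
      _ ≤ ∑ i, x i := Finset.sum_le_sum fun i _ => this i
  have hP : (0 : ℝ) < ((∑ i, x i : ℤ) : ℝ) + (m + j) * ℓ := by
    have h1 : (0 : ℤ) < (∑ i, x i) + (m + j) * ℓ := by
      have hml : (1:ℤ) ≤ m := by exact_mod_cast hm
      have hl1 : (1:ℤ) ≤ ℓ := by exact_mod_cast hℓ1
      nlinarith [hsum_low]
    calc (0:ℝ) < (((∑ i, x i) + (m + j) * ℓ : ℤ) : ℝ) := by exact_mod_cast h1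
      _ = ((∑ i, x i : ℤ) : ℝ) + (m + j) * ℓ := by push_cast; ring
  set c₀ : ℝ := (((∑ i, x i : ℤ) : ℝ) + (m + j) * ℓ) / m with hc₀
  have hc₀pos : 0 < c₀ := div_pos hP hm'
  have hc₀m : c₀ * m = ((∑ i, x i : ℤ) : ℝ) + (m + j) * ℓ := by
    rw [hc₀, div_mul_cancel₀ _ (ne_of_gt hm')]
  -- membership of c₀
  have hmemc₀ : (fun i => (x i : ℝ)) ∈ c₀ • convexHull ℝ (klVerts n j m) := by
    set μ₀ : ℝ := ℓ / c₀ with hμ₀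
    set μ : Fin n → ℝ := fun i =>
      ((x i : ℝ) + if (i : ℕ) < j then (ℓ : ℝ) else 0) / (c₀ * m) with hμ
    have hμnn : ∀ i, 0 ≤ μ i := by
      intro i
      apply div_nonneg _ (le_of_lt (by positivity))
      by_cases h : (i : ℕ) < j
      · have := hlow i h
        simp only [h, if_true]
        have : (-(ℓ:ℤ) : ℝ) ≤ (x i : ℝ) := by exact_mod_cast this
        push_cast at this ⊢
        linarith
      · have := hlow2 i (le_of_not_gt h)
        simp only [h, if_false]
        have h2 : (0:ℝ) ≤ (x i : ℝ) := by exact_mod_cast this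
        linarith [h2]
    have hsum1 : μ₀ + ∑ i, μ i = 1 := by
      have : ∑ i, μ i
          = (((∑ i, x i : ℤ) : ℝ) + j * ℓ) / (c₀ * m) := by
        rw [hμ, ← Finset.sum_div]
        congr 1
        rw [Finset.sum_add_distrib, sum_ite_lt hjn]
        push_cast; ring
      have hcm : (c₀ * (m:ℝ)) ≠ 0 := ne_of_gt (mul_pos hc₀pos hm')
      have h1 : (ℓ:ℝ)/c₀ = ((ℓ:ℝ)*m)/(c₀*m) := by
        rw [mul_div_mul_right _ _ (ne_of_gt hm')]
      rw [this, hμ₀, h1, ← add_div,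
        show (ℓ:ℝ)*m + (((∑ i, x i : ℤ) : ℝ) + j * ℓ) = c₀ * m from by rw [hc₀m]; ring]
      exact div_self hcm
    have hc₀ne : c₀ ≠ 0 := ne_of_gt hc₀pos
    have hmne : (m:ℝ) ≠ 0 := ne_of_gt hm'
    refine ⟨_, mem_hull μ₀ μ (by positivity) hμnn hsum1, ?_⟩
    funext i
    simp only [Pi.smul_apply, smul_eq_mul, hμ, hμ₀]
    by_cases h : (i : ℕ) < j <;> simp only [h, if_true, if_false] <;> field_simp <;> ring
  -- lower bound
  have hlb : ∀ c : ℝ, 0 ≤ c → (fun i => (x i : ℝ)) ∈ c • convexHull ℝ (klVerts n j m) →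
      c₀ ≤ c := by
    intro c hc ⟨p, hp, hxp⟩
    set g : (Fin n → ℝ) → ℝ := fun y => (∑ i, y i) - (m + j) * y i₀ with hg
    have hgsub : convexHull ℝ (klVerts n j m) ⊆ {y | g y ≤ m} := by
      apply convexHull_min
      · rintro v (rfl | ⟨ι, rfl⟩)
        · simp only [hg, Set.mem_setOf_eq]
          rw [sum_ite_lt hjn]
          simp only [hi₀, if_true]
          have : (0:ℝ) ≤ m + j := by positivity
          nlinarith [hm']
        · simp only [hg, Set.mem_setOf_eq]
          rw [Finset.sum_ite_eq' Finset.univ ι (fun _ => (m : ℝ))]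
          simp only [Finset.mem_univ, if_true]
          have h2 : (0:ℝ) ≤ (m + j) * (if i₀ = ι then (m : ℝ) else 0) := by
            split
            · positivity
            · simp
          linarith
      · intro y hy z hz a b ha hb hab
        simp only [hg, Set.mem_setOf_eq] at hy hz ⊢
        have : g (a • y + b • z) = a * g y + b * g z := by
          simp only [hg, Pi.add_apply, Pi.smul_apply, smul_eq_mul]
          rw [Finset.sum_add_distrib, ← Finset.mul_sum, ← Finset.mul_sum]
          ring
        simp only [hg] at this
        rw [this]
        nlinarith
    have hgp : g p ≤ m := hgsub hp
    have hgx : g (fun i => (x i : ℝ)) = c * g p := by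
      rw [← hxp]
      simp only [hg, Pi.smul_apply, smul_eq_mul]
      rw [← Finset.mul_sum]
      ring
    have hgxval : g (fun i => (x i : ℝ)) = c₀ * m := by
      simp only [hg]
      have hcast : ((∑ i, x i : ℤ):ℝ) = ∑ i, ((x i : ℤ):ℝ) := by push_cast; rfl
      have hx₀R : ((x i₀ : ℤ) : ℝ) = -(ℓ:ℝ) := by rw [hx₀]; push_cast; ring
      rw [hx₀R, hc₀m, hcast]
      ring
    have : c₀ * m ≤ c * m := by
      rw [← hgxval, hgx]
      exact mul_le_mul_of_nonneg_left hgp hc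
    exact le_of_mul_le_mul_right this hm'
  rw [polyWeight]
  apply le_antisymm
  · exact csInf_le ⟨0, fun c hc => hc.1⟩ ⟨le_of_lt hc₀pos, hmemc₀⟩
  · exact le_csInf ⟨c₀, le_of_lt hc₀pos, hmemc₀⟩ fun c hc => hlb c hc.1 hc.2

def klBack (j ℓ : ℕ) {n : ℕ} (A : Finset (Fin n)) (f : Fin n → ℕ) : Fin n → ℤ :=
  fun i => if i ∈ A then -(ℓ : ℤ) else if (i : ℕ) < j then (f i : ℤ) - ((ℓ : ℤ) - 1) else (f i : ℤ)

/-- Counting lattice points of weight `k/m` in a stratum of the cone of the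
Kloosterman polytope: exactly `s` of the first `j` coordinates equal `−ℓ`, the
remaining first `j` coordinates are `≥ −(ℓ−1)`, and the rest are `≥ 0`. -/
theorem stmt14 (n m j s ℓ k : ℕ) (hm : 0 < m) (hs2 : 2 ≤ s) (hsj : s ≤ j)
    (hjn : j ≤ n) (hℓ1 : 1 ≤ ℓ) (hℓn : ℓ ≤ n) (hexc : ¬(s = j ∧ j = n)) :
    (Set.ncard {x : Fin n → ℤ |
        (Finset.univ.filter fun i : Fin n => (i : ℕ) < j ∧ x i = -(ℓ : ℤ)).card = s ∧
        (∀ i : Fin n, (i : ℕ) < j → (x i = -(ℓ : ℤ) ∨ -((ℓ : ℤ) - 1) ≤ x i)) ∧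
        (∀ i : Fin n, j ≤ (i : ℕ) → 0 ≤ x i) ∧
        polyWeight (klVerts n j m) x = (k : ℝ) / m} : ℤ) =
      (j.choose s : ℤ) * ch ((k : ℤ) - m * ℓ + n - j - 1) (n - s - 1) := by
  classical
  have hj1 : 1 ≤ j := by omega
  have hsn : s < n := by omega
  set J : Finset (Fin n) := Finset.univ.filter (fun i : Fin n => (i : ℕ) < j) with hJ
  have hJcard : J.card = j := card_filter_lt hjn
  -- Step 1: replace the weight condition by a sum condition
  have hw : ∀ x : Fin n → ℤ,
      (Finset.univ.filter fun i : Fin n => (i : ℕ) < j ∧ x i = -(ℓ : ℤ)).card = s →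
      (∀ i : Fin n, (i : ℕ) < j → (x i = -(ℓ : ℤ) ∨ -((ℓ : ℤ) - 1) ≤ x i)) →
      (∀ i : Fin n, j ≤ (i : ℕ) → 0 ≤ x i) →
      (polyWeight (klVerts n j m) x = (k : ℝ) / m ↔
        (∑ i, x i) = (k : ℤ) - ((m : ℤ) + j) * ℓ) := by
    intro x h1 h2 h3
    obtain ⟨i₀, hi₀mem⟩ :
        (Finset.univ.filter fun i : Fin n => (i : ℕ) < j ∧ x i = -(ℓ : ℤ)).Nonempty :=
      Finset.card_pos.mp (by rw [h1]; omega)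
    rw [Finset.mem_filter] at hi₀mem
    have hlow : ∀ i : Fin n, (i : ℕ) < j → -(ℓ : ℤ) ≤ x i := by
      intro i hi; rcases h2 i hi with h | h
      · exact le_of_eq h.symm
      · linarith
    rw [weight_eq hm hj1 hjn x ℓ hℓ1 hlow h3 i₀ hi₀mem.2.1 hi₀mem.2.2]
    have hm' : (0 : ℝ) < m := by exact_mod_cast hm
    constructor
    · intro h
      rw [div_eq_div_iff hm'.ne' hm'.ne'] at h
      have h'' : ((∑ i, x i : ℤ) : ℝ) + ((m : ℝ) + j) * ℓ = k := mul_right_cancel₀ hm'.ne' h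
      have : (∑ i, x i : ℤ) + ((m : ℤ) + j) * ℓ = k := by exact_mod_cast h''
      linarith
    · intro h
      rw [h]; push_cast; ring
  have hSet : {x : Fin n → ℤ |
        (Finset.univ.filter fun i : Fin n => (i : ℕ) < j ∧ x i = -(ℓ : ℤ)).card = s ∧
        (∀ i : Fin n, (i : ℕ) < j → (x i = -(ℓ : ℤ) ∨ -((ℓ : ℤ) - 1) ≤ x i)) ∧
        (∀ i : Fin n, j ≤ (i : ℕ) → 0 ≤ x i) ∧
        polyWeight (klVerts n j m) x = (k : ℝ) / m}
      = {x : Fin n → ℤ |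
        (Finset.univ.filter fun i : Fin n => (i : ℕ) < j ∧ x i = -(ℓ : ℤ)).card = s ∧
        (∀ i : Fin n, (i : ℕ) < j → (x i = -(ℓ : ℤ) ∨ -((ℓ : ℤ) - 1) ≤ x i)) ∧
        (∀ i : Fin n, j ≤ (i : ℕ) → 0 ≤ x i) ∧
        (∑ i, x i) = (k : ℤ) - ((m : ℤ) + j) * ℓ} := by
    ext x
    simp only [Set.mem_setOf_eq]
    constructor
    · rintro ⟨h1, h2, h3, h4⟩; exact ⟨h1, h2, h3, (hw x h1 h2 h3).1 h4⟩
    · rintro ⟨h1, h2, h3, h4⟩; exact ⟨h1, h2, h3, (hw x h1 h2 h3).2 h4⟩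
  rw [hSet]
  by_cases hT : ((k : ℤ) - m * ℓ - j + s) < 0
  · -- empty case
    have hempty : {x : Fin n → ℤ |
        (Finset.univ.filter fun i : Fin n => (i : ℕ) < j ∧ x i = -(ℓ : ℤ)).card = s ∧
        (∀ i : Fin n, (i : ℕ) < j → (x i = -(ℓ : ℤ) ∨ -((ℓ : ℤ) - 1) ≤ x i)) ∧
        (∀ i : Fin n, j ≤ (i : ℕ) → 0 ≤ x i) ∧
        (∑ i, x i) = (k : ℤ) - ((m : ℤ) + j) * ℓ} = ∅ := by
      ext x
      simp only [Set.mem_setOf_eq, Set.mem_empty_iff_false, iff_false, not_and]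
      intro h1 h2 h3 h4
      set A := Finset.univ.filter (fun i : Fin n => (i : ℕ) < j ∧ x i = -(ℓ : ℤ)) with hA
      have hAsubJ : A ⊆ J := by
        intro i hi
        rw [hA, Finset.mem_filter] at hi
        rw [hJ, Finset.mem_filter]
        exact ⟨hi.1, hi.2.1⟩
      have hsA : ∑ i ∈ A, x i = -((s : ℤ)) * ℓ := by
        rw [Finset.sum_congr rfl (fun i hi => (Finset.mem_filter.mp hi).2.2),
          Finset.sum_const, h1, nsmul_eq_mul]
        ring
      have hcompl_filter : Aᶜ.filter (fun i : Fin n => (i : ℕ) < j) = J \ A := by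
        ext i
        simp only [Finset.mem_filter, Finset.mem_compl, Finset.mem_sdiff, hJ,
          Finset.mem_univ, true_and]
        tauto
      have hcardJA : (J \ A).card = j - s := by
        rw [Finset.card_sdiff_of_subset hAsubJ, hJcard, h1]
      have h5 : ∀ i ∈ Aᶜ, (if (i : ℕ) < j then -((ℓ : ℤ) - 1) else 0) ≤ x i := by
        intro i hi
        rw [Finset.mem_compl, hA, Finset.mem_filter] at hi
        by_cases hij : (i : ℕ) < j
        · rcases h2 i hij with he | hge
          · exact absurd ⟨Finset.mem_univ _, hij, he⟩ hi
          · simpa [hij] using hge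
        · simpa [hij] using h3 i (le_of_not_gt hij)
      have h6 : ∑ i ∈ Aᶜ, (if (i : ℕ) < j then -((ℓ : ℤ) - 1) else 0)
          = -((ℓ : ℤ) - 1) * ((j : ℤ) - s) := by
        rw [← Finset.sum_filter, hcompl_filter, Finset.sum_const, hcardJA, nsmul_eq_mul,
          Nat.cast_sub hsj]
        ring
      have h7 := Finset.sum_le_sum h5
      rw [h6] at h7
      have hsplit := Finset.sum_add_sum_compl A x
      have hl : (1 : ℤ) ≤ ℓ := by exact_mod_cast hℓ1
      nlinarith [h7, hsplit, hsA, h4, hT]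
    rw [hempty]
    have hch : ch ((k : ℤ) - m * ℓ + n - j - 1) (n - s - 1) = 0 := by
      unfold ch
      split
      · rfl
      · next h =>
        have hlt : ((k : ℤ) - m * ℓ + n - j - 1).toNat < n - s - 1 := by
          have := hT
          generalize hq : (m : ℤ) * ℓ = P at this h ⊢
          omega
        rw [Nat.choose_eq_zero_of_lt hlt]
        rfl
    rw [hch]
    simp
  · -- main case
    push_neg at hT
    set T' : ℕ := ((k : ℤ) - m * ℓ - j + s).toNat with hT'def
    have hT' : (T' : ℤ) = (k : ℤ) - m * ℓ - j + s := Int.toNat_of_nonneg hT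
    set X : Finset (Fin n → ℤ) :=
      (J.powersetCard s).biUnion
        (fun A => (Finset.piAntidiag Aᶜ T').image (klBack j ℓ A)) with hX
    -- facts about members of the powerset
    have hAfacts : ∀ A ∈ J.powersetCard s, A ⊆ J ∧ A.card = s := by
      intro A hA
      rw [Finset.mem_powersetCard] at hA
      exact hA
    have hmemJ : ∀ (A : Finset (Fin n)), A ⊆ J → ∀ i ∈ A, (i : ℕ) < j := by
      intro A hAJ i hi
      have := hAJ hi
      rw [hJ, Finset.mem_filter] at this
      exact this.2
    -- the filter of a back image is A
    have hfilt : ∀ A ∈ J.powersetCard s, ∀ f ∈ Finset.piAntidiag Aᶜ T',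
        (Finset.univ.filter fun i : Fin n => (i : ℕ) < j ∧ (klBack j ℓ A f) i = -(ℓ : ℤ)) = A := by
      intro A hA f hf
      obtain ⟨hAJ, hAcard⟩ := hAfacts A hA
      ext i
      rw [Finset.mem_filter]
      constructor
      · rintro ⟨-, hij, hval⟩
        by_contra hiA
        rw [klBack, if_neg hiA, if_pos hij] at hval
        have : (0 : ℤ) ≤ (f i : ℤ) := Int.natCast_nonneg _
        omega
      · intro hiA
        refine ⟨Finset.mem_univ _, hmemJ A hAJ i hiA, ?_⟩
        rw [klBack, if_pos hiA]
    -- S' = ↑X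
    have hXS : {x : Fin n → ℤ |
        (Finset.univ.filter fun i : Fin n => (i : ℕ) < j ∧ x i = -(ℓ : ℤ)).card = s ∧
        (∀ i : Fin n, (i : ℕ) < j → (x i = -(ℓ : ℤ) ∨ -((ℓ : ℤ) - 1) ≤ x i)) ∧
        (∀ i : Fin n, j ≤ (i : ℕ) → 0 ≤ x i) ∧
        (∑ i, x i) = (k : ℤ) - ((m : ℤ) + j) * ℓ} = ↑X := by
      ext x
      simp only [Set.mem_setOf_eq, hX, Finset.coe_biUnion, Set.mem_iUnion, Finset.mem_coe,
        Finset.mem_image]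
      constructor
      · rintro ⟨h1, h2, h3, h4⟩
        set A := Finset.univ.filter (fun i : Fin n => (i : ℕ) < j ∧ x i = -(ℓ : ℤ)) with hA
        have hAJ : A ⊆ J := by
          intro i hi
          rw [hA, Finset.mem_filter] at hi
          rw [hJ, Finset.mem_filter]
          exact ⟨hi.1, hi.2.1⟩
        have hApow : A ∈ J.powersetCard s := Finset.mem_powersetCard.mpr ⟨hAJ, h1⟩
        refine ⟨A, hApow, fun i => if (i : ℕ) < j then (x i + ((ℓ : ℤ) - 1)).toNat
          else (x i).toNat, ?_, ?_⟩
        · -- membership in piAntidiag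
          have hval : ∀ i ∈ Aᶜ,
              ((if (i : ℕ) < j then (x i + ((ℓ : ℤ) - 1)).toNat else (x i).toNat : ℕ) : ℤ)
              = x i + (if (i : ℕ) < j then (ℓ : ℤ) - 1 else 0) := by
            intro i hi
            rw [Finset.mem_compl, hA, Finset.mem_filter] at hi
            by_cases hij : (i : ℕ) < j
            · rcases h2 i hij with he | hge
              · exact absurd ⟨Finset.mem_univ _, hij, he⟩ hi
              · simp only [hij, if_true]
                rw [Int.toNat_of_nonneg (by linarith)]
            · simp only [hij, if_false]
              rw [Int.toNat_of_nonneg (h3 i (le_of_not_gt hij))]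
              ring
          rw [Finset.mem_piAntidiag]
          constructor
          · -- the sum
            have hcast : ((∑ i ∈ Aᶜ, (if (i : ℕ) < j then (x i + ((ℓ : ℤ) - 1)).toNat
                else (x i).toNat) : ℕ) : ℤ) = (T' : ℤ) := by
              rw [Nat.cast_sum, Finset.sum_congr rfl hval, Finset.sum_add_distrib]
              have hcompl_filter : Aᶜ.filter (fun i : Fin n => (i : ℕ) < j) = J \ A := by
                ext i
                simp only [Finset.mem_filter, Finset.mem_compl, Finset.mem_sdiff, hJ,
                  Finset.mem_univ, true_and]
                tauto
              have h6 : ∑ i ∈ Aᶜ, (if (i : ℕ) < j then (ℓ : ℤ) - 1 else 0)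
                  = ((ℓ : ℤ) - 1) * ((j : ℤ) - s) := by
                rw [← Finset.sum_filter, hcompl_filter, Finset.sum_const,
                  Finset.card_sdiff_of_subset hAJ, hJcard, h1, nsmul_eq_mul, Nat.cast_sub hsj]
                ring
              have hsA : ∑ i ∈ A, x i = -((s : ℤ)) * ℓ := by
                rw [Finset.sum_congr rfl (fun i hi => (Finset.mem_filter.mp hi).2.2),
                  Finset.sum_const, h1, nsmul_eq_mul]
                ring
              have hsplit := Finset.sum_add_sum_compl A x
              rw [h6, hT']
              have : ∑ i ∈ Aᶜ, x i = (k : ℤ) - ((m : ℤ) + j) * ℓ + (s : ℤ) * ℓ := by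
                rw [← h4, ← hsplit, hsA]; ring
              rw [this]
              ring
            exact_mod_cast hcast
          · intro i hi
            rw [Finset.mem_compl]
            intro hiA
            have hij := hmemJ A hAJ i hiA
            rw [hA, Finset.mem_filter] at hiA
            simp only [hij, if_true, hiA.2.2] at hi
            omega
        · -- back recovers x
          funext i
          rw [klBack]
          by_cases hiA : i ∈ A
          · rw [if_pos hiA]
            rw [hA, Finset.mem_filter] at hiA
            exact hiA.2.2.symm
          · rw [if_neg hiA]
            by_cases hij : (i : ℕ) < j
            · simp only [hij, if_true]
              rcases h2 i hij with he | hge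
              · exact absurd (by rw [hA, Finset.mem_filter]; exact ⟨Finset.mem_univ _, hij, he⟩) hiA
              · rw [Int.toNat_of_nonneg (by linarith)]
                ring
            · simp only [hij, if_false]
              exact Int.toNat_of_nonneg (h3 i (le_of_not_gt hij))
      · rintro ⟨A, hA, f, hf, rfl⟩
        obtain ⟨hAJ, hAcard⟩ := hAfacts A hA
        rw [Finset.mem_piAntidiag] at hf
        have hsupp : ∀ i ∈ A, f i = 0 := by
          intro i hi
          by_contra hne
          have := hf.2 i hne
          rw [Finset.mem_compl] at this
          exact this hi
        refine ⟨?_, ?_, ?_, ?_⟩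
        · rw [hfilt A hA f (Finset.mem_piAntidiag.mpr hf), hAcard]
        · intro i hij
          by_cases hiA : i ∈ A
          · left; rw [klBack, if_pos hiA]
          · right
            rw [klBack, if_neg hiA, if_pos hij]
            have : (0 : ℤ) ≤ (f i : ℤ) := Int.natCast_nonneg _
            linarith
        · intro i hij
          have hiA : i ∉ A := fun h => by
            have := hmemJ A hAJ i h; omega
          rw [klBack, if_neg hiA, if_neg (by omega)]
          exact Int.natCast_nonneg _
        · -- the sum
          have hsplit := Finset.sum_add_sum_compl A (klBack j ℓ A f)
          have hsA : ∑ i ∈ A, klBack j ℓ A f i = -((s : ℤ)) * ℓ := by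
            rw [Finset.sum_congr rfl (fun i hi => by rw [klBack, if_pos hi]),
              Finset.sum_const, hAcard, nsmul_eq_mul]
            ring
          have hsAc : ∑ i ∈ Aᶜ, klBack j ℓ A f i
              = (T' : ℤ) - ((ℓ : ℤ) - 1) * ((j : ℤ) - s) := by
            have : ∀ i ∈ Aᶜ, klBack j ℓ A f i
                = (f i : ℤ) + (if (i : ℕ) < j then -((ℓ : ℤ) - 1) else 0) := by
              intro i hi
              rw [Finset.mem_compl] at hi
              rw [klBack, if_neg hi]
              by_cases hij : (i : ℕ) < j <;> simp [hij] <;> ring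
            rw [Finset.sum_congr rfl this, Finset.sum_add_distrib]
            have hcompl_filter : Aᶜ.filter (fun i : Fin n => (i : ℕ) < j) = J \ A := by
              ext i
              simp only [Finset.mem_filter, Finset.mem_compl, Finset.mem_sdiff, hJ,
                Finset.mem_univ, true_and]
              tauto
            have h6 : ∑ i ∈ Aᶜ, (if (i : ℕ) < j then -((ℓ : ℤ) - 1) else 0)
                = -(((ℓ : ℤ) - 1) * ((j : ℤ) - s)) := by
              rw [← Finset.sum_filter, hcompl_filter, Finset.sum_const,
                Finset.card_sdiff_of_subset hAJ, hJcard, hAcard, nsmul_eq_mul, Nat.cast_sub hsj]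
              ring
            have h7 : ∑ i ∈ Aᶜ, (f i : ℤ) = (T' : ℤ) := by
              rw [← Nat.cast_sum, hf.1]
            rw [h6, h7]
            ring
          rw [← hsplit, hsA, hsAc, hT']
          push_cast
          ring
    rw [hXS, Set.ncard_coe_finset]
    -- disjointness
    have hdisj : ∀ A₁ ∈ J.powersetCard s, ∀ A₂ ∈ J.powersetCard s, A₁ ≠ A₂ →
        Disjoint ((Finset.piAntidiag A₁ᶜ T').image (klBack j ℓ A₁))
          ((Finset.piAntidiag A₂ᶜ T').image (klBack j ℓ A₂)) := by
      intro A₁ h₁ A₂ h₂ hne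
      rw [Finset.disjoint_left]
      rintro x hx₁ hx₂
      obtain ⟨f₁, hf₁, rfl⟩ := Finset.mem_image.mp hx₁
      obtain ⟨f₂, hf₂, heq⟩ := Finset.mem_image.mp hx₂
      apply hne
      rw [← hfilt A₁ h₁ f₁ hf₁, ← hfilt A₂ h₂ f₂ hf₂, heq]
    rw [hX, Finset.card_biUnion hdisj]
    have hcardim : ∀ A ∈ J.powersetCard s,
        ((Finset.piAntidiag Aᶜ T').image (klBack j ℓ A)).card
          = ((n - s) + T' - 1).choose T' := by
      intro A hA
      obtain ⟨hAJ, hAcard⟩ := hAfacts A hA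
      rw [Finset.card_image_of_injOn, card_piAntidiag]
      · congr 2
        rw [Finset.card_compl, Fintype.card_fin, hAcard]
      · intro f₁ hf₁ f₂ hf₂ heq
        rw [Finset.mem_coe, Finset.mem_piAntidiag] at hf₁ hf₂
        funext i
        by_cases hiA : i ∈ A
        · have h₁ : f₁ i = 0 := by
            by_contra hne
            exact (Finset.mem_compl.mp (hf₁.2 i hne)) hiA
          have h₂ : f₂ i = 0 := by
            by_contra hne
            exact (Finset.mem_compl.mp (hf₂.2 i hne)) hiA
          rw [h₁, h₂]
        · have := congrFun heq i
          rw [klBack, klBack, if_neg hiA, if_neg hiA] at this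
          by_cases hij : (i : ℕ) < j
          · rw [if_pos hij, if_pos hij] at this
            omega
          · rw [if_neg hij, if_neg hij] at this
            omega
    rw [Finset.sum_congr rfl hcardim, Finset.sum_const, Finset.card_powersetCard, hJcard,
      smul_eq_mul]
    -- final arithmetic
    have hch : ch ((k : ℤ) - m * ℓ + n - j - 1) (n - s - 1)
        = (((n - s) + T' - 1).choose T' : ℤ) := by
      unfold ch
      have hnneg : ¬((k : ℤ) - m * ℓ + n - j - 1 < 0) := by
        generalize hq : (m : ℤ) * ℓ = P at hT' ⊢
        omega
      rw [if_neg hnneg]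
      have htn : ((k : ℤ) - m * ℓ + n - j - 1).toNat = T' + (n - s - 1) := by
        generalize hq : (m : ℤ) * ℓ = P at hT' ⊢
        omega
      rw [htn]
      norm_cast
      have h1 : n - s + T' - 1 = T' + (n - s - 1) := by omega
      rw [h1, ← Nat.choose_symm (show (n - s - 1) ≤ T' + (n - s - 1) by omega)]
      congr 1
      omega
    rw [hch]
    push_cast
    ring
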